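/- (Parametric well-posedness with Λ-independent bound) Suppose V = [H_0^1(Ω)]², f ∈ V*, 0 < μ_min ≤ μ, λ ≥ Λ λ̂_min > 0 a.e., B(u,v) = ∫_Ω [2μ ε(u):ε(v) + λ(∇·u)(∇·v)] dx is coercive with B(v,v) ≥ c μ_min ‖v‖_V², and assume there exists a bounded right inverse of the divergence: for every u ∈ V there is u* ∈ V with ∇·u* = ∇·u and ‖u*‖_V ≤ C_0 ‖∇·u‖. If u ∈ V solves B(u,v) = ⟨f,v⟩ for all v ∈ V, then ‖u‖_V + Λ ‖∇·u‖ ≤ C ‖f‖_{V*} with C independent of Λ. -/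

import Mathlib

open scoped RealInnerProductSpace

/-- Parametric well-posedness with `Λ`-independent a priori bound. Abstract setting:
`V` is the solution Hilbert space, `Eps : V → W` the strain operator (bounded by 1),
`Div : V → X` the divergence, `Mμ`/`Mlam` multiplication by the Lamé coefficients with
`μ_min ≤ μ ≤ μ_max`, `λ ≥ Λ λ̂_min`, `B(u,v) = 2⟪μ ε(u), ε(v)⟫ + ⟪λ ∇·u, ∇·v⟫` coercive,
and the divergence admitting a bounded right inverse. Then any solution of
`B(u,·) = f` satisfies `‖u‖_V + Λ ‖∇·u‖ ≤ C ‖f‖_{V*}` with `C` independent of `Λ`. -/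
theorem stmt15 {V W X : Type*}
    [NormedAddCommGroup V] [InnerProductSpace ℝ V] [CompleteSpace V]
    [NormedAddCommGroup W] [InnerProductSpace ℝ W] [CompleteSpace W]
    [NormedAddCommGroup X] [InnerProductSpace ℝ X] [CompleteSpace X]
    (Eps : V →L[ℝ] W) (hEps : ∀ v : V, ‖Eps v‖ ≤ ‖v‖)
    (c μmin μmax lamhatmin C₀ : ℝ)
    (hc : 0 < c) (hμmin : 0 < μmin) (hμmax : μmin ≤ μmax)
    (hlam : 0 < lamhatmin) (hC₀ : 0 < C₀) :
    ∃ C : ℝ, 0 < C ∧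
      ∀ (Λ : ℝ), 1 ≤ Λ →
      ∀ (Mμ : W →L[ℝ] W) (Mlam : X →L[ℝ] X) (Div : V →L[ℝ] X),
        (∀ w : W, μmin * ‖w‖ ^ 2 ≤ ⟪Mμ w, w⟫) →
        (∀ w w' : W, ⟪Mμ w, w'⟫ ≤ μmax * ‖w‖ * ‖w'‖) →
        (∀ ξ : X, Λ * lamhatmin * ‖ξ‖ ^ 2 ≤ ⟪Mlam ξ, ξ⟫) →
        (∀ u : V, ∃ ustar : V, Div ustar = Div u ∧ ‖ustar‖ ≤ C₀ * ‖Div u‖) →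
        ∀ (f : V →L[ℝ] ℝ) (u : V),
          (∀ v : V, c * μmin * ‖v‖ ^ 2 ≤
            2 * ⟪Mμ (Eps v), Eps v⟫ + ⟪Mlam (Div v), Div v⟫) →
          (∀ v : V, 2 * ⟪Mμ (Eps u), Eps v⟫ + ⟪Mlam (Div u), Div v⟫ = f v) →
          ‖u‖ + Λ * ‖Div u‖ ≤ C * ‖f‖ := by
  have hμmax0 : 0 < μmax := lt_of_lt_of_le hμmin hμmax
  refine ⟨1/(c*μmin) + C₀/lamhatmin * (1 + 2*μmax * (1/(c*μmin))), by positivity, ?_⟩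
  intro Λ hΛ Mμ Mlam Div hμlow hμup hlamlow hinv f u hcoer heq
  have hf : (0:ℝ) ≤ ‖f‖ := norm_nonneg _
  -- bound on ‖u‖
  have h1 : c * μmin * ‖u‖ ^ 2 ≤ ‖f‖ * ‖u‖ := by
    have := (hcoer u).trans_eq (heq u)
    have h2 : f u ≤ ‖f‖ * ‖u‖ := (le_abs_self _).trans (f.le_opNorm u)
    linarith
  have hu : c * μmin * ‖u‖ ≤ ‖f‖ := by
    rcases eq_or_lt_of_le (norm_nonneg u) with h0 | h0
    · rw [← h0]; simp [hf]
    · nlinarith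
  -- bound on Λ ‖Div u‖
  obtain ⟨us, hdiv, hle⟩ := hinv u
  have h3 : Λ * lamhatmin * ‖Div u‖ ^ 2 ≤ (‖f‖ + 2 * μmax * ‖u‖) * (C₀ * ‖Div u‖) := by
    have e1 := heq us
    rw [hdiv] at e1
    have a : f us ≤ ‖f‖ * ‖us‖ := (le_abs_self _).trans (f.le_opNorm us)
    have b : ⟪Mμ (Eps u), -(Eps us)⟫ ≤ μmax * ‖Eps u‖ * ‖-(Eps us)‖ := hμup _ _
    rw [inner_neg_right, norm_neg] at b
    have hEu : ‖Eps u‖ ≤ ‖u‖ := hEps u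
    have hEus : ‖Eps us‖ ≤ ‖us‖ := hEps us
    have h4 := hlamlow (Div u)
    have hEu0 : (0:ℝ) ≤ ‖Eps u‖ := norm_nonneg _
    have hEus0 : (0:ℝ) ≤ ‖Eps us‖ := norm_nonneg _
    have hus0 : (0:ℝ) ≤ ‖us‖ := norm_nonneg _
    have hu0 : (0:ℝ) ≤ ‖u‖ := norm_nonneg _
    nlinarith [mul_le_mul_of_nonneg_left hle hf,
      mul_le_mul_of_nonneg_left (mul_le_mul hEu hEus hEus0 hu0) (by positivity : (0:ℝ) ≤ 2*μmax),
      mul_le_mul_of_nonneg_left hle (mul_nonneg (by positivity : (0:ℝ) ≤ 2*μmax) hu0)]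
  have hD : lamhatmin * (Λ * ‖Div u‖) ≤ C₀ * (‖f‖ + 2 * μmax * ‖u‖) := by
    rcases eq_or_lt_of_le (norm_nonneg (Div u)) with h0 | h0
    · rw [← h0]
      have : (0:ℝ) ≤ C₀ * (‖f‖ + 2 * μmax * ‖u‖) := by positivity
      simpa using this
    · nlinarith [mul_pos (lt_of_lt_of_le one_pos hΛ) hlam]
  -- combine
  have hΛD0 : (0:ℝ) ≤ Λ * ‖Div u‖ := mul_nonneg (le_trans zero_le_one hΛ) (norm_nonneg _)
  have hK : (0:ℝ) < c * μmin * lamhatmin := by positivity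
  rw [← mul_le_mul_iff_of_pos_left hK]
  have hC : (c*μmin*lamhatmin) * ((1/(c*μmin) + C₀/lamhatmin*(1+2*μmax*(1/(c*μmin)))) * ‖f‖)
      = (lamhatmin + C₀*(c*μmin) + 2*μmax*C₀) * ‖f‖ := by
    field_simp
    ring
  rw [hC]
  have t1 : lamhatmin * (c * μmin * ‖u‖) ≤ lamhatmin * ‖f‖ :=
    mul_le_mul_of_nonneg_left hu hlam.le
  have t2 : (c*μmin) * (lamhatmin * (Λ * ‖Div u‖)) ≤ (c*μmin) * (C₀ * (‖f‖ + 2 * μmax * ‖u‖)) :=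
    mul_le_mul_of_nonneg_left hD (by positivity)
  have t3 : (2*μmax*C₀) * (c * μmin * ‖u‖) ≤ (2*μmax*C₀) * ‖f‖ :=
    mul_le_mul_of_nonneg_left hu (by positivity)
  nlinarith [t1, t2, t3]
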